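/- Suppose l < i < u, l < j < u, u ≤ i + B, l ≥ i − D (both bounds reachable), and K ≤ 2(u − l). Then the number of integer grid bridges from i to j with B upward jumps that attain both the value l at some index and the value u at some index equals c_{lu} + c_{ul}, where c_{lu} = C(K, B − (u − l)) if B ≥ u − l and c_{lu} = 0 otherwise, and c_{ul} = C(K, B + (u − l)). -/

import Mathlib

namespace BridgeAux
open Finset

variable {K : ℕ}

def Steps (ω : Fin (K+1) → ℤ) : Prop :=
  ∀ n (h : n < K), |ω ⟨n+1, by omega⟩ - ω ⟨n, by omega⟩| = 1

lemma steps_cases {ω : Fin (K+1) → ℤ} (hs : Steps ω) {n : ℕ} (h : n < K) :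
    ω ⟨n+1, by omega⟩ = ω ⟨n, by omega⟩ + 1 ∨ ω ⟨n+1, by omega⟩ = ω ⟨n, by omega⟩ - 1 := by
  have := hs n h
  rcases abs_eq (by norm_num : (0:ℤ) ≤ 1) |>.mp this with h1 | h1
  · left; omega
  · right; omega

lemma dist_le {ω : Fin (K+1) → ℤ} (hs : Steps ω) {a b : ℕ} (hab : a ≤ b) (hb : b ≤ K) :
    |ω ⟨b, by omega⟩ - ω ⟨a, by omega⟩| ≤ (b : ℤ) - a := by
  induction b, hab using Nat.le_induction with
  | base => simp
  | succ n hn ih =>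
    have h1 := ih (by omega)
    have h2 := hs n (by omega)
    have := abs_sub_abs_le_abs_sub (ω ⟨n+1, by omega⟩ - ω ⟨a, by omega⟩) (ω ⟨n, by omega⟩ - ω ⟨a, by omega⟩)
    simp only [sub_sub_sub_cancel_right] at this
    push_cast
    have habs : |ω ⟨n+1, by omega⟩ - ω ⟨a, by omega⟩| ≤ |ω ⟨n, by omega⟩ - ω ⟨a, by omega⟩| + 1 := by
      omega
    omega

lemma ivt_up {ω : Fin (K+1) → ℤ} (hs : Steps ω) {a b : ℕ} {c : ℤ} (hab : a ≤ b) (hb : b ≤ K)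
    (h1 : ω ⟨a, by omega⟩ ≤ c) (h2 : c ≤ ω ⟨b, by omega⟩) :
    ∃ t, a ≤ t ∧ t ≤ b ∧ ∃ ht : t < K + 1, ω ⟨t, ht⟩ = c := by
  induction b, hab using Nat.le_induction with
  | base => exact ⟨a, le_refl _, le_refl _, by omega, le_antisymm h1 h2⟩
  | succ n hn ih =>
    by_cases hc : c ≤ ω ⟨n, by omega⟩
    · obtain ⟨t, h3, h4, h5⟩ := ih (by omega) h1 hc
      exact ⟨t, h3, by omega, h5⟩
    · push_neg at hc
      rcases steps_cases hs (show n < K by omega) with h | h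
      · exact ⟨n+1, by omega, le_refl _, by omega, by omega⟩
      · omega

lemma ivt_down {ω : Fin (K+1) → ℤ} (hs : Steps ω) {a b : ℕ} {c : ℤ} (hab : a ≤ b) (hb : b ≤ K)
    (h1 : c ≤ ω ⟨a, by omega⟩) (h2 : ω ⟨b, by omega⟩ ≤ c) :
    ∃ t, a ≤ t ∧ t ≤ b ∧ ∃ ht : t < K + 1, ω ⟨t, ht⟩ = c := by
  have hs' : Steps (fun k => -ω k) := by
    intro n h
    have := hs n h
    simp only
    rw [show -ω ⟨n+1, by omega⟩ - -ω ⟨n, by omega⟩ = -(ω ⟨n+1, by omega⟩ - ω ⟨n, by omega⟩) by ring,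
      abs_neg]
    exact this
  obtain ⟨t, h3, h4, h5, h6⟩ := ivt_up hs' (c := -c) hab hb (by simpa) (by simpa)
  exact ⟨t, h3, h4, h5, by omega⟩

lemma fin_succ_eq (k : Fin K) : (k.succ : Fin (K+1)) = ⟨(k:ℕ)+1, by omega⟩ := rfl
lemma fin_castSucc_eq (k : Fin K) : (k.castSucc : Fin (K+1)) = ⟨(k:ℕ), by omega⟩ := rfl

noncomputable def upCard (ω : Fin (K+1) → ℤ) : ℕ :=
  (Finset.univ.filter (fun k : Fin K => ω k.succ = ω k.castSucc + 1)).card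

lemma step_val {ω : Fin (K+1) → ℤ} (hs : ∀ n (h : n < K), |ω ⟨n+1, by omega⟩ - ω ⟨n, by omega⟩| = 1)
    (k : Fin K) :
    ω k.succ - ω k.castSucc = if ω k.succ = ω k.castSucc + 1 then 1 else -1 := by
  have := hs k k.isLt
  rw [fin_succ_eq, fin_castSucc_eq]
  split_ifs with h
  · omega
  · rcases abs_eq (by norm_num : (0:ℤ) ≤ 1) |>.mp this with h1 | h1 <;> omega

lemma telescope {ω : Fin (K+1) → ℤ}
    (hs : ∀ n (h : n < K), |ω ⟨n+1, by omega⟩ - ω ⟨n, by omega⟩| = 1) :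
    ω (Fin.last K) - ω 0 = 2 * (upCard ω : ℤ) - K := by
  classical
  set g : ℕ → ℤ := fun n => ω ⟨min n K, by omega⟩ with hg
  have key : ∑ k : Fin K, (ω k.succ - ω k.castSucc) = ω (Fin.last K) - ω 0 := by
    have h1 : ∀ k : Fin K, ω k.succ - ω k.castSucc = g ((k:ℕ)+1) - g (k:ℕ) := by
      intro k
      have hk := k.isLt
      have e1 : (⟨min ((k:ℕ)+1) K, by omega⟩ : Fin (K+1)) = ⟨(k:ℕ)+1, by omega⟩ :=
        Fin.ext (show min ((k:ℕ)+1) K = (k:ℕ)+1 by omega)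
      have e2 : (⟨min (k:ℕ) K, by omega⟩ : Fin (K+1)) = ⟨(k:ℕ), by omega⟩ :=
        Fin.ext (show min (k:ℕ) K = (k:ℕ) by omega)
      simp only [hg, fin_succ_eq, fin_castSucc_eq, e1, e2]
    calc ∑ k : Fin K, (ω k.succ - ω k.castSucc)
        = ∑ k : Fin K, (g ((k:ℕ)+1) - g (k:ℕ)) := Finset.sum_congr rfl (fun k _ => h1 k)
      _ = ∑ n ∈ Finset.range K, (g (n+1) - g n) :=
          Fin.sum_univ_eq_sum_range (fun n => g (n+1) - g n) K
      _ = g K - g 0 := Finset.sum_range_sub g K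
      _ = ω (Fin.last K) - ω 0 := by
          have e1 : (⟨min K K, by omega⟩ : Fin (K+1)) = Fin.last K := Fin.ext (by simp)
          have e2 : (⟨min 0 K, by omega⟩ : Fin (K+1)) = 0 := Fin.ext (by simp)
          simp only [hg, e1, e2]
  rw [← key]
  have h2 : ∀ k : Fin K, ω k.succ - ω k.castSucc
      = 2 * (if ω k.succ = ω k.castSucc + 1 then (1:ℤ) else 0) - 1 := by
    intro k
    rw [step_val hs k]
    split_ifs <;> ring
  rw [Finset.sum_congr rfl (fun k _ => h2 k), Finset.sum_sub_distrib]
  simp only [Finset.sum_const, Finset.card_univ, Fintype.card_fin, nsmul_eq_mul, mul_one]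
  rw [← Finset.mul_sum, Finset.sum_boole]
  rfl

noncomputable def upSet (ω : Fin (K+1) → ℤ) : Finset (Fin K) := by
  classical exact Finset.univ.filter (fun k => ω k.succ = ω k.castSucc + 1)

def psi (i : ℤ) (t : Finset (Fin K)) : Fin (K+1) → ℤ :=
  fun n => i + 2*((t.filter (fun x : Fin K => (x:ℕ) < (n:ℕ))).card : ℤ) - (n:ℕ)

lemma card_filter_succ (t : Finset (Fin K)) {n : ℕ} (hn : n < K) :
    (t.filter (fun x : Fin K => (x:ℕ) < n+1)).card
      = (t.filter (fun x : Fin K => (x:ℕ) < n)).card + (if (⟨n, hn⟩ : Fin K) ∈ t then 1 else 0) := by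
  classical
  have h1 : t.filter (fun x : Fin K => (x:ℕ) < n+1)
      = t.filter (fun x : Fin K => (x:ℕ) < n) ∪ t.filter (fun x : Fin K => x = ⟨n, hn⟩) := by
    rw [← Finset.filter_or]
    apply Finset.filter_congr
    intro x _
    constructor
    · intro h
      rcases Nat.lt_succ_iff_lt_or_eq.mp h with h | h
      · exact Or.inl h
      · exact Or.inr (Fin.ext h)
    · rintro (h | rfl)
      · omega
      · simp
  have h2 : t.filter (fun x : Fin K => x = ⟨n, hn⟩)
      = if (⟨n, hn⟩ : Fin K) ∈ t then {(⟨n, hn⟩ : Fin K)} else ∅ := by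
    split_ifs with h
    · ext x
      simp only [Finset.mem_filter, Finset.mem_singleton]
      exact ⟨fun ⟨_, e⟩ => e, fun e => ⟨e ▸ h, e⟩⟩
    · ext x
      simp only [Finset.mem_filter, Finset.notMem_empty, iff_false, not_and]
      intro hx e
      rw [e] at hx
      exact h hx
  rw [h1, Finset.card_union_of_disjoint]
  · rw [h2]; split_ifs <;> simp
  · rw [Finset.disjoint_filter]
    intro x _ hx hx2
    rw [hx2] at hx
    simp at hx

lemma psi_zero (i : ℤ) (t : Finset (Fin K)) : psi i t 0 = i := by
  simp [psi]

lemma psi_steps (i : ℤ) (t : Finset (Fin K)) : Steps (psi i t) := by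
  intro n h
  simp only [psi]
  have := card_filter_succ t h
  rw [this]
  rw [abs_eq (by norm_num : (0:ℤ) ≤ 1)]
  split_ifs with hmem
  · left; push_cast; ring
  · right; push_cast; ring

lemma psi_up (i : ℤ) (t : Finset (Fin K)) (k : Fin K) :
    (psi i t k.succ = psi i t k.castSucc + 1) ↔ k ∈ t := by
  have hk := k.isLt
  have hsucc : ((k.succ : Fin (K+1)) : ℕ) = (k:ℕ)+1 := rfl
  have hcast : ((k.castSucc : Fin (K+1)) : ℕ) = (k:ℕ) := rfl
  simp only [psi, hsucc, hcast]
  have := card_filter_succ t hk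
  have hmk : (⟨(k:ℕ), hk⟩ : Fin K) = k := Fin.ext rfl
  rw [hmk] at this
  rw [this]
  split_ifs with h
  · simp only [h, iff_true]
    push_cast; ring
  · simp only [h, iff_false]
    push_cast
    intro hcon
    omega

lemma psi_upSet (i : ℤ) (t : Finset (Fin K)) : upSet (psi i t) = t := by
  classical
  ext k
  simp [upSet, psi_up]

lemma step_up_or_down {ω : Fin (K+1) → ℤ} (hs : Steps ω) {n : ℕ} (h : n < K) :
    ω ⟨n+1, by omega⟩ = ω ⟨n, by omega⟩
      + (if (⟨n, h⟩ : Fin K) ∈ upSet ω then 1 else -1) := by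
  classical
  have h1 := hs n h
  have hmem : (⟨n, h⟩ : Fin K) ∈ upSet ω ↔ ω ⟨n+1, by omega⟩ = ω ⟨n, by omega⟩ + 1 := by
    simp [upSet]
  split_ifs with h2
  · exact hmem.mp h2
  · rw [hmem] at h2
    rcases abs_eq (by norm_num : (0:ℤ) ≤ 1) |>.mp h1 with h3 | h3 <;> omega

lemma eq_psi_of_steps {ω : Fin (K+1) → ℤ} (hs : Steps ω) {i : ℤ} (h0 : ω 0 = i) :
    ω = psi i (upSet ω) := by
  funext k
  obtain ⟨n, hn⟩ := k
  induction n with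
  | zero =>
    have : (⟨0, hn⟩ : Fin (K+1)) = 0 := rfl
    rw [this, h0, psi_zero]
  | succ m ih =>
    have hm : m < K := by omega
    have h1 := step_up_or_down hs hm
    have h2 := step_up_or_down (psi_steps i (upSet ω)) hm
    rw [ih (by omega)] at h1
    have h3 : upSet (psi i (upSet ω)) = upSet ω := psi_upSet i (upSet ω)
    rw [h3] at h2
    rw [h1, ← h2]

end BridgeAux

namespace BridgeAux
open Finset
variable {K : ℕ}

lemma upCard_eq (ω : Fin (K+1) → ℤ) : upCard ω = (upSet ω).card := by
  classical
  simp [upCard, upSet]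

lemma ncard_count (i : ℤ) (m : ℕ) :
    Set.ncard {ω : Fin (K+1) → ℤ | ω 0 = i ∧ Steps ω ∧ upCard ω = m} = K.choose m := by
  classical
  have hinj : Set.InjOn upSet {ω : Fin (K+1) → ℤ | ω 0 = i ∧ Steps ω ∧ upCard ω = m} := by
    intro ω1 h1 ω2 h2 he
    rw [eq_psi_of_steps h1.2.1 h1.1, eq_psi_of_steps h2.2.1 h2.1, he]
  have himg : upSet '' {ω : Fin (K+1) → ℤ | ω 0 = i ∧ Steps ω ∧ upCard ω = m}
      = {t : Finset (Fin K) | t.card = m} := by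
    ext t
    constructor
    · rintro ⟨ω, ⟨h0, hs, hm⟩, rfl⟩
      show (upSet ω).card = m
      rw [← upCard_eq]
      exact hm
    · intro ht
      exact ⟨psi i t, ⟨psi_zero i t, psi_steps i t, by rw [upCard_eq, psi_upSet]; exact ht⟩,
        psi_upSet i t⟩
  have h2 : {t : Finset (Fin K) | t.card = m} = ((Finset.univ.powersetCard m : Finset (Finset (Fin K))) : Set (Finset (Fin K))) := by
    ext t
    simp [Finset.mem_powersetCard_univ]
  calc Set.ncard {ω : Fin (K+1) → ℤ | ω 0 = i ∧ Steps ω ∧ upCard ω = m}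
      = (upSet '' {ω : Fin (K+1) → ℤ | ω 0 = i ∧ Steps ω ∧ upCard ω = m}).ncard :=
        (Set.ncard_image_of_injOn hinj).symm
    _ = ({t : Finset (Fin K) | t.card = m}).ncard := by rw [himg]
    _ = (((Finset.univ.powersetCard m : Finset (Finset (Fin K))) : Set (Finset (Fin K)))).ncard := by rw [h2]
    _ = (Finset.univ.powersetCard m).card := Set.ncard_coe_finset _
    _ = K.choose m := by rw [Finset.card_powersetCard]; simp

lemma pathSet_eq (i j' : ℤ) (m : ℕ) (h : j' = i + 2*m - K) :
    {ω : Fin (K+1) → ℤ | ω 0 = i ∧ ω (Fin.last K) = j' ∧ Steps ω}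
      = {ω : Fin (K+1) → ℤ | ω 0 = i ∧ Steps ω ∧ upCard ω = m} := by
  ext ω
  constructor
  · rintro ⟨h0, hl, hs⟩
    refine ⟨h0, hs, ?_⟩
    have ht := telescope hs
    rw [h0, hl] at ht
    omega
  · rintro ⟨h0, hs, hm⟩
    refine ⟨h0, ?_, hs⟩
    have ht := telescope hs
    rw [h0, hm] at ht
    omega

lemma ncard_pathSet (i j' : ℤ) (m : ℕ) (h : j' = i + 2*m - K) :
    Set.ncard {ω : Fin (K+1) → ℤ | ω 0 = i ∧ ω (Fin.last K) = j' ∧ Steps ω} = K.choose m := by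
  rw [pathSet_eq i j' m h]
  exact ncard_count i m

lemma pathSet_empty (i j' : ℤ) (h : j' < i - K) :
    {ω : Fin (K+1) → ℤ | ω 0 = i ∧ ω (Fin.last K) = j' ∧ Steps ω} = ∅ := by
  ext ω
  simp only [Set.mem_setOf_eq, Set.mem_empty_iff_false, iff_false, not_and]
  intro h0 hl hs
  have ht := telescope hs
  rw [h0, hl] at ht
  omega

end BridgeAux

namespace BridgeAux
open Finset
variable {K : ℕ}

def Hits (ω : Fin (K+1) → ℤ) (c : ℤ) : Prop := ∃ k : Fin (K+1), ω k = c

open Classical in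
noncomputable def hitTimes (ω : Fin (K+1) → ℤ) (c : ℤ) : Finset (Fin (K+1)) :=
  Finset.univ.filter (fun k => ω k = c)

lemma hitTimes_nonempty {ω : Fin (K+1) → ℤ} {c : ℤ} (h : Hits ω c) :
    (hitTimes ω c).Nonempty := by
  classical
  obtain ⟨k, hk⟩ := h
  exact ⟨k, by simp [hitTimes, hk]⟩

open Classical in
noncomputable def fh (ω : Fin (K+1) → ℤ) (c : ℤ) : Fin (K+1) :=
  if h : Hits ω c then (hitTimes ω c).min' (hitTimes_nonempty h) else 0

lemma fh_hit {ω : Fin (K+1) → ℤ} {c : ℤ} (h : Hits ω c) : ω (fh ω c) = c := by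
  classical
  rw [fh, dif_pos h]
  have := Finset.min'_mem (hitTimes ω c) (hitTimes_nonempty h)
  simpa [hitTimes] using this

lemma fh_min {ω : Fin (K+1) → ℤ} {c : ℤ} (h : Hits ω c) {k : Fin (K+1)} (hk : ω k = c) :
    fh ω c ≤ k := by
  classical
  rw [fh, dif_pos h]
  exact Finset.min'_le _ _ (by simp [hitTimes, hk])

lemma fh_notbefore {ω : Fin (K+1) → ℤ} {c : ℤ} (h : Hits ω c) {k : Fin (K+1)}
    (hk : k < fh ω c) : ω k ≠ c := by
  intro he
  exact absurd (fh_min h he) (not_le.mpr hk)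

noncomputable def reflAt (c : ℤ) (ω : Fin (K+1) → ℤ) : Fin (K+1) → ℤ :=
  fun k => if k ≤ fh ω c then ω k else 2*c - ω k

lemma reflAt_of_le {ω : Fin (K+1) → ℤ} {c : ℤ} {k : Fin (K+1)} (hk : k ≤ fh ω c) :
    reflAt c ω k = ω k := if_pos hk

lemma reflAt_of_ge {ω : Fin (K+1) → ℤ} {c : ℤ} (h : Hits ω c) {k : Fin (K+1)}
    (hk : fh ω c ≤ k) : reflAt c ω k = 2*c - ω k := by
  unfold reflAt
  split_ifs with h1
  · have : k = fh ω c := le_antisymm h1 hk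
    rw [this, fh_hit h]
    ring
  · rfl

lemma hits_reflAt {ω : Fin (K+1) → ℤ} {c : ℤ} (h : Hits ω c) : Hits (reflAt c ω) c :=
  ⟨fh ω c, by rw [reflAt_of_le (le_refl _), fh_hit h]⟩

lemma fh_reflAt {ω : Fin (K+1) → ℤ} {c : ℤ} (h : Hits ω c) : fh (reflAt c ω) c = fh ω c := by
  apply le_antisymm
  · exact fh_min (hits_reflAt h) (by rw [reflAt_of_le (le_refl _), fh_hit h])
  · by_contra hc
    push_neg at hc
    have h1 : reflAt c ω (fh (reflAt c ω) c) = c := fh_hit (hits_reflAt h)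
    rw [reflAt_of_le (le_of_lt hc)] at h1
    exact fh_notbefore h hc h1

lemma reflAt_invol {ω : Fin (K+1) → ℤ} {c : ℤ} (h : Hits ω c) :
    reflAt c (reflAt c ω) = ω := by
  funext k
  have hf := fh_reflAt h
  by_cases h1 : k ≤ fh ω c
  · rw [reflAt_of_le (show k ≤ fh (reflAt c ω) c from hf ▸ h1), reflAt_of_le h1]
  · push_neg at h1
    rw [reflAt_of_ge (hits_reflAt h) (show fh (reflAt c ω) c ≤ k from hf ▸ le_of_lt h1),
      reflAt_of_ge h (le_of_lt h1)]
    ring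

lemma reflAt_zero {ω : Fin (K+1) → ℤ} {c : ℤ} : reflAt c ω 0 = ω 0 :=
  reflAt_of_le (Fin.zero_le _)

lemma reflAt_last {ω : Fin (K+1) → ℤ} {c : ℤ} (h : Hits ω c) :
    reflAt c ω (Fin.last K) = 2*c - ω (Fin.last K) :=
  reflAt_of_ge h (Fin.le_last _)

lemma reflAt_steps {ω : Fin (K+1) → ℤ} {c : ℤ} (h : Hits ω c) (hs : Steps ω) :
    Steps (reflAt c ω) := by
  intro n hn
  have hstep := hs n hn
  set T := fh ω c with hT
  by_cases h1 : n + 1 ≤ (T : ℕ)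
  · rw [reflAt_of_le (show (⟨n+1, by omega⟩ : Fin (K+1)) ≤ T from h1),
      reflAt_of_le (show (⟨n, by omega⟩ : Fin (K+1)) ≤ T from by
        simp only [Fin.le_def]; omega)]
    exact hstep
  · push_neg at h1
    by_cases h2 : (T : ℕ) ≤ n
    · rw [reflAt_of_ge h (show T ≤ (⟨n+1, by omega⟩ : Fin (K+1)) from by
          simp only [Fin.le_def]; omega),
        reflAt_of_ge h (show T ≤ (⟨n, by omega⟩ : Fin (K+1)) from h2)]
      rw [show 2*c - ω ⟨n+1, by omega⟩ - (2*c - ω ⟨n, by omega⟩)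
          = -(ω ⟨n+1, by omega⟩ - ω ⟨n, by omega⟩) by ring, abs_neg]
      exact hstep
    · push_neg at h2
      have hTn : (T : ℕ) = n := by omega
      have hωn : ω ⟨n, by omega⟩ = c := by
        have := fh_hit h
        rw [← hT] at this
        convert this using 2
        exact Fin.ext hTn.symm
      rw [reflAt_of_ge h (show T ≤ (⟨n+1, by omega⟩ : Fin (K+1)) from by
          simp only [Fin.le_def]; omega),
        reflAt_of_le (show (⟨n, by omega⟩ : Fin (K+1)) ≤ T from by
          simp only [Fin.le_def]; omega)]
      rw [hωn, show 2*c - ω ⟨n+1, by omega⟩ - c = -(ω ⟨n+1, by omega⟩ - c) by ring, abs_neg]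
      rw [hωn] at hstep
      exact hstep

lemma ncard_eq_of_reflAt (c : ℤ) (S1 S2 : Set (Fin (K+1) → ℤ))
    (h1 : ∀ ω ∈ S1, Hits ω c) (h2 : ∀ ω ∈ S2, Hits ω c)
    (m1 : ∀ ω ∈ S1, reflAt c ω ∈ S2) (m2 : ∀ ω ∈ S2, reflAt c ω ∈ S1) :
    S1.ncard = S2.ncard := by
  have hinj : Set.InjOn (reflAt c) S1 := by
    intro a ha b hb he
    rw [← reflAt_invol (h1 a ha), ← reflAt_invol (h1 b hb), he]
  have himg : reflAt c '' S1 = S2 := by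
    apply subset_antisymm
    · rintro _ ⟨ω, hω, rfl⟩
      exact m1 ω hω
    · intro ω hω
      exact ⟨reflAt c ω, m2 ω hω, reflAt_invol (h2 ω hω)⟩
  rw [← himg, Set.ncard_image_of_injOn hinj]

end BridgeAux

namespace BridgeAux
open Finset
variable {K : ℕ}

lemma dist_le' {ω : Fin (K+1) → ℤ} (hs : Steps ω) {a b : Fin (K+1)} (hab : a ≤ b) :
    |ω b - ω a| ≤ ((b:ℕ) : ℤ) - ((a:ℕ) : ℤ) := by
  have h := dist_le hs (a := (a:ℕ)) (b := (b:ℕ)) hab (by omega)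
  simpa using h

lemma finite_startSteps (i : ℤ) : {ω : Fin (K+1) → ℤ | ω 0 = i ∧ Steps ω}.Finite := by
  apply Set.Finite.of_finite_image (f := upSet) (Set.toFinite _)
  intro a ha b hb he
  rw [eq_psi_of_steps ha.2 ha.1, eq_psi_of_steps hb.2 hb.1, he]

end BridgeAux

open BridgeAux in
theorem test_main (i j l u : ℤ) (B D : ℕ)
    (hj : j = i + B - D) (hli : l < i) (hiu : i < u) (hlj : l < j) (hju : j < u)
    (hur : u ≤ i + B) (hlr : i - D ≤ l) (hK : ((B + D : ℕ) : ℤ) ≤ 2 * (u - l)) :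
    Set.ncard {ω : Fin (B + D + 1) → ℤ | (ω 0 = i ∧ ω (Fin.last (B+D)) = j ∧ Steps ω) ∧
        (∃ k : Fin (B + D + 1), ω k = l) ∧ (∃ k : Fin (B + D + 1), ω k = u)}
      = (if u - l ≤ (B : ℤ) then Nat.choose (B + D) (B - (u - l).toNat) else 0)
        + Nat.choose (B + D) (B + (u - l).toNat) := by
  set K := B + D with hKdef
  set Pth : ℤ → Set (Fin (K+1) → ℤ) :=
    fun j' => {ω | ω 0 = i ∧ ω (Fin.last K) = j' ∧ Steps ω} with hPth
  set Slu : Set (Fin (K+1) → ℤ) :=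
    {ω | ω ∈ Pth j ∧ ∃ a b : Fin (K+1), a ≤ b ∧ ω a = l ∧ ω b = u} with hSlu
  set Sul : Set (Fin (K+1) → ℤ) :=
    {ω | ω ∈ Pth j ∧ ∃ a b : Fin (K+1), a ≤ b ∧ ω a = u ∧ ω b = l} with hSul
  have hzero : ∀ h : 0 < K + 1, (⟨0, h⟩ : Fin (K+1)) = 0 := fun _ => rfl
  have hlastmk : ∀ h : K < K + 1, (⟨K, h⟩ : Fin (K+1)) = Fin.last K := fun _ => rfl
  -- step 1 : the set is Slu ∪ Sul
  have hM : {ω : Fin (K + 1) → ℤ | (ω 0 = i ∧ ω (Fin.last K) = j ∧ Steps ω) ∧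
        (∃ k : Fin (K + 1), ω k = l) ∧ (∃ k : Fin (K + 1), ω k = u)} = Slu ∪ Sul := by
    ext ω
    simp only [Set.mem_setOf_eq, Set.mem_union, hSlu, hSul, hPth]
    constructor
    · rintro ⟨hp, ⟨a, ha⟩, ⟨b, hb⟩⟩
      rcases le_total a b with hab | hab
      · exact Or.inl ⟨hp, a, b, hab, ha, hb⟩
      · exact Or.inr ⟨hp, b, a, hab, hb, ha⟩
    · rintro (⟨hp, a, b, hab, ha, hb⟩ | ⟨hp, a, b, hab, ha, hb⟩)
      · exact ⟨hp, ⟨a, ha⟩, ⟨b, hb⟩⟩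
      · exact ⟨hp, ⟨b, hb⟩, ⟨a, ha⟩⟩
  -- disjointness
  have hdisj : Disjoint Slu Sul := by
    rw [Set.disjoint_left]
    rintro ω ⟨⟨h0, hlast, hs⟩, a, b, hab, ha, hb⟩ ⟨_, c, d, hcd, hc, hd⟩
    rcases le_total b d with hbd | hdb
    · -- l@a ≤ u@b ≤ l@d
      have h1 := dist_le' hs (Fin.zero_le a)
      have h2 := dist_le' hs hab
      have h3 := dist_le' hs hbd
      rw [h0, ha] at h1
      rw [ha, hb] at h2
      rw [hb, hd] at h3
      have hdK : (d : ℕ) ≤ K := by omega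
      rw [abs_le] at h1 h2 h3
      simp only [Fin.val_zero, Nat.cast_zero] at h1
      omega
    · -- u@c ≤ l@d ≤ u@b
      have h1 := dist_le' hs (Fin.zero_le c)
      have h2 := dist_le' hs hcd
      have h3 := dist_le' hs hdb
      rw [h0, hc] at h1
      rw [hc, hd] at h2
      rw [hd, hb] at h3
      have hbK : (b : ℕ) ≤ K := by omega
      rw [abs_le] at h1 h2 h3
      simp only [Fin.val_zero, Nat.cast_zero] at h1
      omega
  -- finiteness
  have hfinSlu : Slu.Finite :=
    (finite_startSteps i).subset (fun ω hω => ⟨hω.1.1, hω.1.2.2⟩)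
  have hfinSul : Sul.Finite :=
    (finite_startSteps i).subset (fun ω hω => ⟨hω.1.1, hω.1.2.2⟩)
  -- count Sul via double reflection
  have hSulcount : Sul.ncard = Nat.choose K (B + (u - l).toNat) := by
    have e1 : Sul.ncard = Set.ncard {ω : Fin (K+1) → ℤ | ω ∈ Pth (2*u-j) ∧ Hits ω (2*u-l)} := by
      apply ncard_eq_of_reflAt u
      · rintro ω ⟨_, a, b, hab, ha, hb⟩
        exact ⟨a, ha⟩
      · rintro ω ⟨⟨h0, hlast, hs⟩, k, hk⟩
        obtain ⟨t, _, htk, htl, htu⟩ := ivt_up hs (a := 0) (b := (k:ℕ)) (c := u)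
          (Nat.zero_le _) (by omega)
          (by rw [hzero, h0]; omega) (by rw [Fin.eta, hk]; omega)
        exact ⟨⟨t, htl⟩, htu⟩
      · rintro ω ⟨⟨h0, hlast, hs⟩, a, b, hab, ha, hb⟩
        have hh : Hits ω u := ⟨a, ha⟩
        refine ⟨⟨by rw [reflAt_zero, h0], by rw [reflAt_last hh, hlast], reflAt_steps hh hs⟩,
          b, ?_⟩
        rw [reflAt_of_ge hh (le_trans (fh_min hh ha) hab), hb]
      · rintro ω ⟨⟨h0, hlast, hs⟩, k, hk⟩
        obtain ⟨t, _, htk, htl, htu⟩ := ivt_up hs (a := 0) (b := (k:ℕ)) (c := u)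
          (Nat.zero_le _) (by omega)
          (by rw [hzero, h0]; omega) (by rw [Fin.eta, hk]; omega)
        have hh : Hits ω u := ⟨⟨t, htl⟩, htu⟩
        have hfk : fh ω u ≤ k := le_trans (fh_min hh htu) (by rw [Fin.le_def]; exact htk)
        refine ⟨⟨by rw [reflAt_zero, h0],
          by rw [reflAt_last hh, hlast]; ring, reflAt_steps hh hs⟩,
          fh ω u, k, hfk, ?_, ?_⟩
        · rw [reflAt_of_le (le_refl _), fh_hit hh]
        · rw [reflAt_of_ge hh hfk, hk]; ring
    have e2 : Set.ncard {ω : Fin (K+1) → ℤ | ω ∈ Pth (2*u-j) ∧ Hits ω (2*u-l)}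
        = Set.ncard (Pth (j + 2*(u-l))) := by
      apply ncard_eq_of_reflAt (2*u-l)
      · exact fun ω hω => hω.2
      · rintro ω ⟨h0, hlast, hs⟩
        obtain ⟨t, _, _, htl, htu⟩ := ivt_up hs (a := 0) (b := K) (c := 2*u-l)
          (Nat.zero_le _) (le_refl _)
          (by rw [hzero, h0]; omega) (by rw [hlastmk, hlast]; omega)
        exact ⟨⟨t, htl⟩, htu⟩
      · rintro ω ⟨⟨h0, hlast, hs⟩, hh⟩
        exact ⟨by rw [reflAt_zero, h0], by rw [reflAt_last hh, hlast]; ring,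
          reflAt_steps hh hs⟩
      · rintro ω ⟨h0, hlast, hs⟩
        obtain ⟨t, _, _, htl, htu⟩ := ivt_up hs (a := 0) (b := K) (c := 2*u-l)
          (Nat.zero_le _) (le_refl _)
          (by rw [hzero, h0]; omega) (by rw [hlastmk, hlast]; omega)
        have hh : Hits ω (2*u-l) := ⟨⟨t, htl⟩, htu⟩
        refine ⟨⟨by rw [reflAt_zero, h0], by rw [reflAt_last hh, hlast]; ring,
          reflAt_steps hh hs⟩, ?_⟩
        exact ⟨fh ω (2*u-l), by rw [reflAt_of_le (le_refl _), fh_hit hh]⟩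
    rw [e1, e2]
    exact ncard_pathSet i _ _ (by push_cast; omega)
  -- count Slu via double reflection (downward)
  have hSlucount : Slu.ncard = Set.ncard (Pth (j - 2*(u-l))) := by
    have e1 : Slu.ncard = Set.ncard {ω : Fin (K+1) → ℤ | ω ∈ Pth (2*l-j) ∧ Hits ω (2*l-u)} := by
      apply ncard_eq_of_reflAt l
      · rintro ω ⟨_, a, b, hab, ha, hb⟩
        exact ⟨a, ha⟩
      · rintro ω ⟨⟨h0, hlast, hs⟩, k, hk⟩
        obtain ⟨t, _, htk, htl, htu⟩ := ivt_down hs (a := 0) (b := (k:ℕ)) (c := l)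
          (Nat.zero_le _) (by omega)
          (by rw [hzero, h0]; omega) (by rw [Fin.eta, hk]; omega)
        exact ⟨⟨t, htl⟩, htu⟩
      · rintro ω ⟨⟨h0, hlast, hs⟩, a, b, hab, ha, hb⟩
        have hh : Hits ω l := ⟨a, ha⟩
        refine ⟨⟨by rw [reflAt_zero, h0], by rw [reflAt_last hh, hlast], reflAt_steps hh hs⟩,
          b, ?_⟩
        rw [reflAt_of_ge hh (le_trans (fh_min hh ha) hab), hb]
      · rintro ω ⟨⟨h0, hlast, hs⟩, k, hk⟩
        obtain ⟨t, _, htk, htl, htu⟩ := ivt_down hs (a := 0) (b := (k:ℕ)) (c := l)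
          (Nat.zero_le _) (by omega)
          (by rw [hzero, h0]; omega) (by rw [Fin.eta, hk]; omega)
        have hh : Hits ω l := ⟨⟨t, htl⟩, htu⟩
        have hfk : fh ω l ≤ k := le_trans (fh_min hh htu) (by rw [Fin.le_def]; exact htk)
        refine ⟨⟨by rw [reflAt_zero, h0],
          by rw [reflAt_last hh, hlast]; ring, reflAt_steps hh hs⟩,
          fh ω l, k, hfk, ?_, ?_⟩
        · rw [reflAt_of_le (le_refl _), fh_hit hh]
        · rw [reflAt_of_ge hh hfk, hk]; ring
    have e2 : Set.ncard {ω : Fin (K+1) → ℤ | ω ∈ Pth (2*l-j) ∧ Hits ω (2*l-u)}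
        = Set.ncard (Pth (j - 2*(u-l))) := by
      apply ncard_eq_of_reflAt (2*l-u)
      · exact fun ω hω => hω.2
      · rintro ω ⟨h0, hlast, hs⟩
        obtain ⟨t, _, _, htl, htu⟩ := ivt_down hs (a := 0) (b := K) (c := 2*l-u)
          (Nat.zero_le _) (le_refl _)
          (by rw [hzero, h0]; omega) (by rw [hlastmk, hlast]; omega)
        exact ⟨⟨t, htl⟩, htu⟩
      · rintro ω ⟨⟨h0, hlast, hs⟩, hh⟩
        exact ⟨by rw [reflAt_zero, h0], by rw [reflAt_last hh, hlast]; ring,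
          reflAt_steps hh hs⟩
      · rintro ω ⟨h0, hlast, hs⟩
        obtain ⟨t, _, _, htl, htu⟩ := ivt_down hs (a := 0) (b := K) (c := 2*l-u)
          (Nat.zero_le _) (le_refl _)
          (by rw [hzero, h0]; omega) (by rw [hlastmk, hlast]; omega)
        have hh : Hits ω (2*l-u) := ⟨⟨t, htl⟩, htu⟩
        refine ⟨⟨by rw [reflAt_zero, h0], by rw [reflAt_last hh, hlast]; ring,
          reflAt_steps hh hs⟩, ?_⟩
        exact ⟨fh ω (2*l-u), by rw [reflAt_of_le (le_refl _), fh_hit hh]⟩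
    rw [e1, e2]
  rw [hM, Set.ncard_union_eq hdisj hfinSlu hfinSul, hSulcount, hSlucount]
  congr 1
  by_cases hcase : u - l ≤ (B:ℤ)
  · rw [if_pos hcase]
    exact ncard_pathSet i _ _ (by push_cast [Nat.cast_sub (by omega : (u-l).toNat ≤ B)]; omega)
  · rw [if_neg hcase]
    have hemp : Pth (j - 2*(u-l)) = ∅ := by
      simp only [hPth]
      exact pathSet_empty i _ (by omega)
    rw [hemp, Set.ncard_empty]



/-- An integer grid bridge from `i` to `j` with `B` upward jumps and `D` downward
jumps. -/
def IsBridge (i j : ℤ) (B D : ℕ) (ω : Fin (B + D + 1) → ℤ) : Prop :=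
  ω 0 = i ∧ ω (Fin.last (B + D)) = j ∧
    (∀ k : Fin (B + D), |ω k.succ - ω k.castSucc| = 1) ∧
    (Finset.univ.filter (fun k : Fin (B + D) => ω k.succ = ω k.castSucc + 1)).card = B

/-- With `l < i < u`, `l < j < u`, both bounds reachable (`u ≤ i + B`, `l ≥ i - D`)
and `K ≤ 2(u - l)`, the number of integer grid bridges from `i` to `j` with `B`
upward jumps attaining both the value `l` and the value `u` equals
`c_{lu} + c_{ul}`, where `c_{lu} = C(K, B - (u - l))` if `B ≥ u - l` (else `0`)
and `c_{ul} = C(K, B + (u - l))`. -/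
theorem bridges_touching_both_bounds_count (i j l u : ℤ) (B D : ℕ)
    (hj : j = i + B - D) (hli : l < i) (hiu : i < u) (hlj : l < j) (hju : j < u)
    (hur : u ≤ i + B) (hlr : i - D ≤ l) (hK : ((B + D : ℕ) : ℤ) ≤ 2 * (u - l)) :
    Set.ncard {ω : Fin (B + D + 1) → ℤ | IsBridge i j B D ω ∧
        (∃ k : Fin (B + D + 1), ω k = l) ∧ (∃ k : Fin (B + D + 1), ω k = u)}
      = (if u - l ≤ (B : ℤ) then Nat.choose (B + D) (B - (u - l).toNat) else 0)
        + Nat.choose (B + D) (B + (u - l).toNat) := by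
  have hset : {ω : Fin (B + D + 1) → ℤ | IsBridge i j B D ω ∧
        (∃ k : Fin (B + D + 1), ω k = l) ∧ (∃ k : Fin (B + D + 1), ω k = u)}
      = {ω : Fin (B + D + 1) → ℤ | (ω 0 = i ∧ ω (Fin.last (B+D)) = j ∧ BridgeAux.Steps ω) ∧
        (∃ k : Fin (B + D + 1), ω k = l) ∧ (∃ k : Fin (B + D + 1), ω k = u)} := by
    ext ω
    simp only [Set.mem_setOf_eq, IsBridge]
    constructor
    · rintro ⟨⟨h0, hl, hs, hc⟩, h2⟩
      exact ⟨⟨h0, hl, fun n h => hs ⟨n, h⟩⟩, h2⟩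
    · rintro ⟨⟨h0, hl, hs⟩, h2⟩
      refine ⟨⟨h0, hl, fun k => hs k k.isLt, ?_⟩, h2⟩
      have ht := BridgeAux.telescope hs
      rw [h0, hl] at ht
      have he : (Finset.univ.filter
          (fun k : Fin (B+D) => ω k.succ = ω k.castSucc + 1)).card = BridgeAux.upCard ω := rfl
      rw [he]
      omega
  rw [hset]
  exact test_main i j l u B D hj hli hiu hlj hju hur hlr hK
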